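/- Let ε ∈ (0,1) and let (a_n)_{−2N ≤ n ≤ 2N} be i.i.d. real N(0,1) variables. Let E be the event that |a_n − 1| ≤ ε for all |n| ≤ 2N and |∑_{k=−2N}^{n} (a_k − 1)(−1)^k| ≤ ε for all |n| ≤ 2N. Then there is a constant c = c(ε) > 0 (independent of N) with P(E) ≥ e^{−cN} for all N ≥ 1. -/

import Mathlib

open MeasureTheory ProbabilityTheory

noncomputable def gp (ε : ℝ) : ℝ := ε * (Real.exp (-2) / Real.sqrt (2 * Real.pi))

lemma gp_pos {ε : ℝ} (h : 0 < ε) : 0 < gp ε := by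
  apply mul_pos h
  positivity

lemma gp_lt_one {ε : ℝ} (h0 : 0 < ε) (h1 : ε ≤ 1) : gp ε < 1 := by
  have h2 : Real.exp (-2) < 1 := by
    rw [Real.exp_lt_one_iff]; norm_num
  have h3 : (1:ℝ) ≤ Real.sqrt (2 * Real.pi) := by
    rw [show (1:ℝ) = Real.sqrt 1 by simp]
    apply Real.sqrt_le_sqrt
    nlinarith [Real.pi_gt_three]
  have : Real.exp (-2) / Real.sqrt (2 * Real.pi) < 1 := by
    rw [div_lt_one (by linarith)]
    linarith
  calc gp ε ≤ 1 * (Real.exp (-2) / Real.sqrt (2 * Real.pi)) := by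
        apply mul_le_mul_of_nonneg_right h1; positivity
    _ < 1 := by simpa using this

lemma gauss_icc {ε c : ℝ} (hε0 : 0 < ε) (hε1 : ε ≤ 1) (hc : |c - 1| ≤ 1/2) :
    ENNReal.ofReal (gp ε) ≤ gaussianReal 0 1 {x | |x - c| ≤ ε/2} := by
  have hset : {x : ℝ | |x - c| ≤ ε/2} = Set.Icc (c - ε/2) (c + ε/2) := by
    ext x
    simp only [Set.mem_setOf_eq, Set.mem_Icc, abs_le]
    constructor <;> intro h <;> constructor <;> linarith [h.1, h.2]
  rw [hset, gaussianReal_apply 0 one_ne_zero]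
  have hlb : ∀ x ∈ Set.Icc (c - ε/2) (c + ε/2),
      ENNReal.ofReal (Real.exp (-2) / Real.sqrt (2 * Real.pi)) ≤ gaussianPDF 0 1 x := by
    intro x hx
    rw [gaussianPDF]
    apply ENNReal.ofReal_le_ofReal
    rw [gaussianPDFReal]
    have hx2 : |x| ≤ 2 := by
      rw [abs_le]; rw [Set.mem_Icc] at hx
      rw [abs_le] at hc
      constructor <;> linarith [hx.1, hx.2, hc.1, hc.2]
    have h1 : -(x - 0)^2 / (2 * ((1:NNReal):ℝ)) = -(x^2/2) := by push_cast; ring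
    rw [h1]
    have h2 : Real.exp (-2) ≤ Real.exp (-(x^2/2)) := by
      apply Real.exp_le_exp.mpr
      nlinarith [abs_nonneg x, sq_abs x]
    have h3 : Real.sqrt (2 * Real.pi * ((1:NNReal):ℝ)) = Real.sqrt (2 * Real.pi) := by
      push_cast; ring_nf
    rw [h3, div_eq_inv_mul]
    apply mul_le_mul_of_nonneg_left h2
    positivity
  calc ENNReal.ofReal (gp ε)
      = ENNReal.ofReal (Real.exp (-2) / Real.sqrt (2 * Real.pi)) * ENNReal.ofReal ε := by
        rw [← ENNReal.ofReal_mul (by positivity), gp]; ring_nf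
    _ = ENNReal.ofReal (Real.exp (-2) / Real.sqrt (2 * Real.pi)) * volume (Set.Icc (c - ε/2) (c + ε/2)) := by
        rw [Real.volume_Icc]; norm_num
    _ = ∫⁻ x in Set.Icc (c - ε/2) (c + ε/2), ENNReal.ofReal (Real.exp (-2) / Real.sqrt (2 * Real.pi)) := by
        rw [setLIntegral_const]
    _ ≤ ∫⁻ x in Set.Icc (c - ε/2) (c + ε/2), gaussianPDF 0 1 x :=
        setLIntegral_mono (measurable_gaussianPDF 0 1) hlb

lemma iIndepFun_congr_ae {Ω : Type} {mΩ : MeasurableSpace Ω} {μ : Measure Ω}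
    {f g : ℤ → Ω → ℝ} (h : iIndepFun f μ)
    (hfg : ∀ i, f i =ᵐ[μ] g i) : iIndepFun g μ := by
  rw [iIndepFun_iff_measure_inter_preimage_eq_mul] at h ⊢
  intro S sets hsets
  have hpre : ∀ i : ℤ, f i ⁻¹' sets i =ᵐ[μ] g i ⁻¹' sets i := by
    intro i
    filter_upwards [hfg i] with ω hω
    show (f i ω ∈ sets i) = (g i ω ∈ sets i)
    rw [hω]
  have hpt : ∀ᵐ ω ∂μ, ∀ i ∈ S, f i ω = g i ω :=
    (ae_ball_iff S.countable_toSet).mpr (fun i (_ : i ∈ S) => hfg i)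
  have hint : (⋂ i ∈ S, f i ⁻¹' sets i) =ᵐ[μ] (⋂ i ∈ S, g i ⁻¹' sets i) := by
    filter_upwards [hpt] with ω hω
    show (ω ∈ ⋂ i ∈ S, f i ⁻¹' sets i) = (ω ∈ ⋂ i ∈ S, g i ⁻¹' sets i)
    rw [eq_iff_iff]
    simp only [Set.mem_iInter, Set.mem_preimage]
    constructor <;> intro hmem i hi
    · rw [← hω i hi]; exact hmem i hi
    · rw [hω i hi]; exact hmem i hi
  rw [← measure_congr hint, h S hsets]
  exact Finset.prod_congr rfl fun i hi => measure_congr (hpre i)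

lemma seq_lb {Ω : Type} [MeasureSpace Ω] [IsProbabilityMeasure (ℙ : Measure Ω)]
    (a : ℤ → Ω → ℝ) (hmeas : ∀ n, Measurable (a n))
    (hindep : iIndepFun a ℙ)
    (hmap : ∀ n, Measure.map (a n) ℙ = gaussianReal 0 1)
    (ε : ℝ) (hε0 : 0 < ε) (hε1 : ε ≤ 1) (M : ℤ) (m : ℕ) :
    ENNReal.ofReal (gp ε ^ (m+1)) ≤
      ℙ {ω | ∀ j ≤ m, |∑ i ∈ Finset.range (j+1), (a (M + (i:ℤ)) ω - 1) * (-1:ℝ)^i| ≤ ε/2} := by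
  induction m with
  | zero =>
    have hsm : MeasurableSet {x : ℝ | |x - 1| ≤ ε/2} :=
      measurableSet_le (measurable_id.sub_const 1).abs measurable_const
    have hs : {ω : Ω | ∀ j ≤ 0, |∑ i ∈ Finset.range (j+1), (a (M + (i:ℤ)) ω - 1) * (-1:ℝ)^i| ≤ ε/2}
        = a M ⁻¹' {x | |x - 1| ≤ ε/2} := by
      ext ω
      simp only [Set.mem_setOf_eq, Set.mem_preimage, Nat.le_zero]
      constructor
      · intro h
        have := h 0 rfl
        simpa using this
      · intro h j hj
        subst hj
        simpa using h
    rw [pow_one, hs, ← Measure.map_apply (hmeas M) hsm, hmap M]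
    exact gauss_icc hε0 hε1 (by norm_num)
  | succ m ih =>
    set σ : ℝ := (-1:ℝ)^(m+1) with hσdef
    set S : Finset ℤ := (Finset.range (m+1)).image (fun i : ℕ => M + (i:ℤ)) with hS
    have hmemS : ∀ i : ℕ, i ≤ m → (M + (i:ℤ)) ∈ S := fun i hi =>
      Finset.mem_image.mpr ⟨i, Finset.mem_range.mpr (by omega), rfl⟩
    set x0 : ℤ := M + ((m+1 : ℕ) : ℤ) with hx0
    have hdisj : Disjoint S ({x0} : Finset ℤ) := by
      rw [Finset.disjoint_singleton_right]
      simp only [hS, Finset.mem_image, Finset.mem_range, hx0]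
      rintro ⟨i, hi, hEq⟩
      omega
    set V : Ω → ({x // x ∈ S} → ℝ) := fun ω i => a i ω with hV
    have hVmeas : Measurable V := measurable_pi_lambda _ (fun i => hmeas i)
    set X : Ω → ℝ := a x0 with hX
    have hXmeas : Measurable X := hmeas x0
    have hindepVX : IndepFun V X ℙ := by
      have h1 := hindep.indepFun_finset S {x0} hdisj hmeas
      have h2 := h1.comp measurable_id
        (measurable_pi_apply (⟨x0, Finset.mem_singleton_self x0⟩ : {x // x ∈ ({x0} : Finset ℤ)}))
      exact h2
    set ext : ({x // x ∈ S} → ℝ) → ℤ → ℝ := fun v n => if h : n ∈ S then v ⟨n, h⟩ else 0 with hext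
    have hextmeas : ∀ n : ℤ, Measurable (fun v => ext v n) := by
      intro n
      by_cases h : n ∈ S
      · simpa [hext, h] using measurable_pi_apply (⟨n, h⟩ : {x // x ∈ S})
      · simpa [hext, h] using (measurable_const : Measurable (fun _ : {x // x ∈ S} → ℝ => (0:ℝ)))
    have hextV : ∀ (i : ℕ), i ≤ m → ∀ ω, ext (V ω) (M + (i:ℤ)) = a (M + (i:ℤ)) ω := by
      intro i hi ω
      simp only [hext, hV, dif_pos (hmemS i hi)]
    set G : ({x // x ∈ S} → ℝ) → ℕ → ℝ :=
      fun v j => ∑ i ∈ Finset.range (j+1), (ext v (M + (i:ℤ)) - 1) * (-1:ℝ)^i with hG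
    have hGmeas : ∀ j, Measurable (fun v => G v j) := fun j =>
      Finset.measurable_sum _ (fun i _ => ((hextmeas (M + (i:ℤ))).sub_const 1).mul_const _)
    set B : Set ({x // x ∈ S} → ℝ) := {v | ∀ j ≤ m, |G v j| ≤ ε/2} with hB
    have hBmeas : MeasurableSet B := by
      have hBeq : B = ⋂ (j : ℕ), ⋂ (_ : j ≤ m), {v | |G v j| ≤ ε/2} := by
        ext v; simp [hB]
      rw [hBeq]
      exact MeasurableSet.iInter fun j => MeasurableSet.iInter fun _ =>
        measurableSet_le (hGmeas j).abs measurable_const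
    set C : Set (({x // x ∈ S} → ℝ) × ℝ) :=
      {q | q.1 ∈ B ∧ |G q.1 m + (q.2 - 1) * σ| ≤ ε/2} with hC
    have hCmeas : MeasurableSet C := by
      have h1 : MeasurableSet {q : ({x // x ∈ S} → ℝ) × ℝ | q.1 ∈ B} := measurable_fst hBmeas
      have h2 : MeasurableSet {q : ({x // x ∈ S} → ℝ) × ℝ | |G q.1 m + (q.2 - 1) * σ| ≤ ε/2} :=
        measurableSet_le
          ((((hGmeas m).comp measurable_fst).add
            ((measurable_snd.sub_const 1).mul_const σ)).abs) measurable_const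
      exact h1.inter h2
    have hGa : ∀ ω, ∀ j ≤ m, G (V ω) j
        = ∑ i ∈ Finset.range (j+1), (a (M + (i:ℤ)) ω - 1) * (-1:ℝ)^i := by
      intro ω j hj
      refine Finset.sum_congr rfl fun i hi => ?_
      rw [hextV i (by simp only [Finset.mem_range] at hi; omega) ω]
    have hAeq : {ω : Ω | ∀ j ≤ m + 1,
          |∑ i ∈ Finset.range (j+1), (a (M + (i:ℤ)) ω - 1) * (-1:ℝ)^i| ≤ ε/2}
        = (fun ω => (V ω, X ω)) ⁻¹' C := by
      ext ω
      simp only [Set.mem_setOf_eq, Set.mem_preimage, hC, hB]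
      constructor
      · intro h
        refine ⟨fun j hj => by rw [hGa ω j hj]; exact h j (by omega), ?_⟩
        have hlast := h (m+1) le_rfl
        rw [Finset.sum_range_succ] at hlast
        rw [hGa ω m le_rfl]
        exact hlast
      · rintro ⟨h1, h2⟩ j hj
        rcases Nat.lt_or_ge j (m+1) with hlt | hge
        · rw [← hGa ω j (by omega)]
          exact h1 j (by omega)
        · have hj' : j = m + 1 := by omega
          subst hj'
          rw [Finset.sum_range_succ, ← hGa ω m le_rfl]
          exact h2
    have hjoint : Measure.map (fun ω => (V ω, X ω)) ℙ
        = (Measure.map V ℙ).prod (Measure.map X ℙ) :=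
      (indepFun_iff_map_prod_eq_prod_map_map hVmeas.aemeasurable hXmeas.aemeasurable).mp hindepVX
    have hP : ℙ {ω : Ω | ∀ j ≤ m + 1,
          |∑ i ∈ Finset.range (j+1), (a (M + (i:ℤ)) ω - 1) * (-1:ℝ)^i| ≤ ε/2}
        = ∫⁻ v, (gaussianReal 0 1) (Prod.mk v ⁻¹' C) ∂(Measure.map V ℙ) := by
      rw [hAeq, ← Measure.map_apply (hVmeas.prodMk hXmeas) hCmeas, hjoint, hX, hmap x0,
        Measure.prod_apply hCmeas]
    have hσ1 : σ = 1 ∨ σ = -1 := neg_one_pow_eq_or ℝ (m+1)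
    have hslice : ∀ v ∈ B, ENNReal.ofReal (gp ε) ≤ gaussianReal 0 1 (Prod.mk v ⁻¹' C) := by
      intro v hv
      have hGv : |G v m| ≤ ε/2 := hv m le_rfl
      have hceq : Prod.mk v ⁻¹' C = {x : ℝ | |x - (1 - σ * G v m)| ≤ ε/2} := by
        ext x
        simp only [Set.mem_preimage, hC, Set.mem_setOf_eq]
        have habs : |G v m + (x - 1) * σ| = |x - (1 - σ * G v m)| := by
          rcases hσ1 with h | h <;> rw [h]
          · rw [show G v m + (x - 1) * 1 = x - (1 - 1 * G v m) by ring]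
          · rw [show G v m + (x - 1) * (-1) = -(x - (1 - (-1) * G v m)) by ring, abs_neg]
        rw [habs]
        exact ⟨fun h => h.2, fun h => ⟨hv, h⟩⟩
      rw [hceq]
      apply gauss_icc hε0 hε1
      have : |1 - σ * G v m - 1| = |G v m| := by
        rcases hσ1 with h | h <;> rw [h] <;> [skip; rw [show (1:ℝ) - -1 * G v m - 1 = -(-(G v m)) by ring]] <;> simp [abs_neg]
      rw [this]
      calc |G v m| ≤ ε/2 := hGv
        _ ≤ 1/2 := by linarith
    have hlower : ENNReal.ofReal (gp ε) * (Measure.map V ℙ) B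
        ≤ ∫⁻ v, gaussianReal 0 1 (Prod.mk v ⁻¹' C) ∂(Measure.map V ℙ) := by
      have h1 : ENNReal.ofReal (gp ε) * (Measure.map V ℙ) B
          = ∫⁻ v, B.indicator (fun _ => ENNReal.ofReal (gp ε)) v ∂(Measure.map V ℙ) := by
        rw [lintegral_indicator hBmeas, setLIntegral_const]
      rw [h1]
      apply lintegral_mono
      intro v
      by_cases hv : v ∈ B
      · rw [Set.indicator_of_mem hv]
        exact hslice v hv
      · rw [Set.indicator_of_notMem hv]
        exact zero_le
    have hVB : (Measure.map V ℙ) B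
        = ℙ {ω | ∀ j ≤ m, |∑ i ∈ Finset.range (j+1), (a (M + (i:ℤ)) ω - 1) * (-1:ℝ)^i| ≤ ε/2} := by
      rw [Measure.map_apply hVmeas hBmeas]
      congr 1
      ext ω
      simp only [Set.mem_preimage, hB, Set.mem_setOf_eq]
      constructor <;> intro h j hj
      · rw [← hGa ω j hj]; exact h j hj
      · rw [hGa ω j hj]; exact h j hj
    calc ENNReal.ofReal (gp ε ^ (m + 1 + 1))
        = ENNReal.ofReal (gp ε) * ENNReal.ofReal (gp ε ^ (m+1)) := by
          rw [← ENNReal.ofReal_mul (gp_pos hε0).le, ← pow_succ']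
      _ ≤ ENNReal.ofReal (gp ε) * ℙ {ω | ∀ j ≤ m,
            |∑ i ∈ Finset.range (j+1), (a (M + (i:ℤ)) ω - 1) * (-1:ℝ)^i| ≤ ε/2} :=
          mul_le_mul_right ih _
      _ = ENNReal.ofReal (gp ε) * (Measure.map V ℙ) B := by rw [hVB]
      _ ≤ ∫⁻ v, gaussianReal 0 1 (Prod.mk v ⁻¹' C) ∂(Measure.map V ℙ) := hlower
      _ = _ := hP.symm

lemma sign_fact (N : ℕ) (i : ℕ) : (-1:ℝ) ^ (-(2*(N:ℤ)) + (i:ℤ)) = (-1:ℝ)^i := by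
  rw [zpow_add₀ (by norm_num : (-1:ℝ) ≠ 0), zpow_neg]
  have h1 : (-1:ℝ) ^ (2*(N:ℤ)) = 1 := by
    rw [show (2*(N:ℤ)) = ((2*N : ℕ) : ℤ) by push_cast; ring, zpow_natCast]
    exact Even.neg_one_pow ⟨N, by ring⟩
  rw [h1, zpow_natCast, inv_one, one_mul]

lemma icc_sum_eq (N : ℕ) (n : ℤ) (hn1 : -(2*(N:ℤ)) ≤ n) (hn2 : n ≤ 2*(N:ℤ)) (f : ℤ → ℝ) :
    ∑ k ∈ Finset.Icc (-(2*(N:ℤ))) n, f k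
      = ∑ i ∈ Finset.range ((n + 2*(N:ℤ)).toNat + 1), f (-(2*(N:ℤ)) + (i:ℤ)) := by
  have hFs : Finset.Icc (-(2*(N:ℤ))) n
      = Finset.map ⟨fun i : ℕ => -(2*(N:ℤ)) + (i:ℤ), (show Function.Injective (fun i : ℕ => -(2*(N:ℤ)) + (i:ℤ)) by intro x y h; simp only at h; omega)⟩
          (Finset.range ((n + 2*(N:ℤ)).toNat + 1)) := by
    ext k
    simp only [Finset.mem_map, Finset.mem_range, Finset.mem_Icc, Function.Embedding.coeFn_mk]
    constructor
    · rintro ⟨hk1, hk2⟩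
      exact ⟨(k + 2*(N:ℤ)).toNat, by omega, by omega⟩
    · rintro ⟨i, hi, rfl⟩
      omega
  rw [hFs, Finset.sum_map]
  simp only [Function.Embedding.coeFn_mk]

lemma reduction {a : ℤ → ℝ} {ε : ℝ} (hε0 : 0 < ε) (N : ℕ)
    (H : ∀ j ≤ 4*N, |∑ i ∈ Finset.range (j+1), (a (-(2*(N:ℤ)) + (i:ℤ)) - 1) * (-1:ℝ)^i| ≤ ε/2) :
    (∀ n : ℤ, |n| ≤ 2*N → |a n - 1| ≤ ε) ∧
    (∀ n : ℤ, |n| ≤ 2*N →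
      |∑ k ∈ Finset.Icc (-(2*(N:ℤ))) n, (a k - 1) * (-1:ℝ)^k| ≤ ε) := by
  have hsum : ∀ n : ℤ, -(2*(N:ℤ)) ≤ n → n ≤ 2*(N:ℤ) →
      |∑ k ∈ Finset.Icc (-(2*(N:ℤ))) n, (a k - 1) * (-1:ℝ)^k| ≤ ε/2 := by
    intro n hn1 hn2
    rw [icc_sum_eq N n hn1 hn2]
    have hrw : ∀ i ∈ Finset.range ((n + 2*(N:ℤ)).toNat + 1),
        (a (-(2*(N:ℤ)) + (i:ℤ)) - 1) * (-1:ℝ) ^ (-(2*(N:ℤ)) + (i:ℤ))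
          = (a (-(2*(N:ℤ)) + (i:ℤ)) - 1) * (-1:ℝ)^i := by
      intro i _
      rw [sign_fact]
    rw [Finset.sum_congr rfl hrw]
    exact H _ (by omega)
  constructor
  · intro n hn
    rw [abs_le] at hn
    set m : ℕ := (n + 2*(N:ℤ)).toNat with hm
    have hnm : n = -(2*(N:ℤ)) + (m:ℤ) := by omega
    have hm4 : m ≤ 4*N := by omega
    match m, hnm, hm4 with
    | 0, hnm, hm4 =>
      have := H 0 (by omega)
      simp only [zero_add, Finset.sum_range_one, Nat.cast_zero, pow_zero, mul_one] at this
      rw [hnm]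
      calc |a (-(2*(N:ℤ)) + ((0:ℕ):ℤ)) - 1| ≤ ε/2 := by simpa using this
        _ ≤ ε := by linarith
    | (k+1), hnm, hm4 =>
      have h1 := H (k+1) (by omega)
      have h2 := H k (by omega)
      have h3 : (∑ i ∈ Finset.range (k+1+1), (a (-(2*(N:ℤ)) + (i:ℤ)) - 1) * (-1:ℝ)^i)
          = (∑ i ∈ Finset.range (k+1), (a (-(2*(N:ℤ)) + (i:ℤ)) - 1) * (-1:ℝ)^i)
            + (a (-(2*(N:ℤ)) + ((k+1:ℕ):ℤ)) - 1) * (-1:ℝ)^(k+1) := Finset.sum_range_succ _ _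
      have h4 : |(a (-(2*(N:ℤ)) + ((k+1:ℕ):ℤ)) - 1) * (-1:ℝ)^(k+1)| ≤ ε := by
        rw [h3] at h1
        calc |(a (-(2*(N:ℤ)) + ((k+1:ℕ):ℤ)) - 1) * (-1:ℝ)^(k+1)|
            = |(∑ i ∈ Finset.range (k+1+1), (a (-(2*(N:ℤ)) + (i:ℤ)) - 1) * (-1:ℝ)^i)
              - (∑ i ∈ Finset.range (k+1), (a (-(2*(N:ℤ)) + (i:ℤ)) - 1) * (-1:ℝ)^i)| := by
              rw [h3]; congr 1; ring
          _ ≤ |∑ i ∈ Finset.range (k+1+1), (a (-(2*(N:ℤ)) + (i:ℤ)) - 1) * (-1:ℝ)^i|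
              + |∑ i ∈ Finset.range (k+1), (a (-(2*(N:ℤ)) + (i:ℤ)) - 1) * (-1:ℝ)^i| :=
              abs_sub _ _
          _ ≤ ε/2 + ε/2 := by
              rw [h3]
              exact add_le_add h1 h2
          _ = ε := by ring
      rw [abs_mul, abs_pow, abs_neg, abs_one, one_pow, mul_one] at h4
      rw [hnm]
      exact_mod_cast h4
  · intro n hn
    rw [abs_le] at hn
    have := hsum n (by omega) (by omega)
    linarith [abs_nonneg (∑ k ∈ Finset.Icc (-(2*(N:ℤ))) n, (a k - 1) * (-1:ℝ)^k)]

theorem event_E_probability (ε : ℝ) (hε0 : 0 < ε) (hε1 : ε < 1) :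
    ∃ c > (0 : ℝ), ∀ (Ω : Type) (_ : MeasureSpace Ω),
      IsProbabilityMeasure (ℙ : Measure Ω) →
      ∀ a : ℤ → Ω → ℝ,
        iIndepFun a ℙ →
        (∀ n, Measure.map (a n) ℙ = gaussianReal 0 1) →
        ∀ N : ℕ, 1 ≤ N →
          ENNReal.ofReal (Real.exp (-c * N)) ≤
            ℙ {ω | (∀ n : ℤ, |n| ≤ 2 * N → |a n ω - 1| ≤ ε) ∧
                   (∀ n : ℤ, |n| ≤ 2 * N →
                     |∑ k ∈ Finset.Icc (-(2 * N : ℤ)) n, (a k ω - 1) * (-1 : ℝ) ^ k| ≤ ε)} := by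
  have hε1' : ε ≤ 1 := le_of_lt hε1
  have hp0 : 0 < gp ε := gp_pos hε0
  have hp1 : gp ε < 1 := gp_lt_one hε0 hε1'
  have hlogpos : 0 < Real.log (1 / gp ε) := Real.log_pos (by rw [lt_div_iff₀ hp0]; linarith)
  refine ⟨5 * Real.log (1 / gp ε), by positivity, ?_⟩
  intro Ω _ hprob a hindep hmap N hN
  haveI := hprob
  have hAE : ∀ n, AEMeasurable (a n) ℙ := by
    intro n
    by_contra h
    have h0 := Measure.map_of_not_aemeasurable h
    rw [hmap n] at h0
    have h1 : (gaussianReal 0 1) Set.univ = 1 := measure_univ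
    rw [h0] at h1
    simp at h1
  set a' : ℤ → Ω → ℝ := fun n => (hAE n).mk (a n) with ha'
  have hmeas' : ∀ n, Measurable (a' n) := fun n => (hAE n).measurable_mk
  have heq : ∀ n, a n =ᵐ[ℙ] a' n := fun n => (hAE n).ae_eq_mk
  have hmap' : ∀ n, Measure.map (a' n) ℙ = gaussianReal 0 1 := fun n => by
    rw [← Measure.map_congr (heq n), hmap n]
  have hindep' : iIndepFun a' ℙ := iIndepFun_congr_ae hindep heq
  -- the event for a equals a.e. the event for a'
  have hae : ∀ᵐ ω ∂(ℙ : Measure Ω), ∀ n ∈ Finset.Icc (-(2 * N : ℤ)) (2 * N : ℤ), a n ω = a' n ω :=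
    (ae_ball_iff (Finset.Icc (-(2 * N : ℤ)) (2 * N : ℤ)).countable_toSet).mpr
      (fun n _ => heq n)
  have hEeq : ℙ {ω | (∀ n : ℤ, |n| ≤ 2 * N → |a n ω - 1| ≤ ε) ∧
                   (∀ n : ℤ, |n| ≤ 2 * N →
                     |∑ k ∈ Finset.Icc (-(2 * N : ℤ)) n, (a k ω - 1) * (-1 : ℝ) ^ k| ≤ ε)}
      = ℙ {ω | (∀ n : ℤ, |n| ≤ 2 * N → |a' n ω - 1| ≤ ε) ∧
                   (∀ n : ℤ, |n| ≤ 2 * N →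
                     |∑ k ∈ Finset.Icc (-(2 * N : ℤ)) n, (a' k ω - 1) * (-1 : ℝ) ^ k| ≤ ε)} := by
    apply measure_congr
    filter_upwards [hae] with ω hω
    have hrw : ∀ n : ℤ, |n| ≤ 2 * N → a n ω = a' n ω := by
      intro n hn
      rw [abs_le] at hn
      exact hω n (Finset.mem_Icc.mpr ⟨hn.1, hn.2⟩)
    show ((∀ n : ℤ, |n| ≤ 2 * N → |a n ω - 1| ≤ ε) ∧ _) = ((∀ n : ℤ, |n| ≤ 2 * N → |a' n ω - 1| ≤ ε) ∧ _)
    rw [eq_iff_iff]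
    have hsums : ∀ n : ℤ, |n| ≤ 2 * N →
        (∑ k ∈ Finset.Icc (-(2 * N : ℤ)) n, (a k ω - 1) * (-1 : ℝ) ^ k)
          = ∑ k ∈ Finset.Icc (-(2 * N : ℤ)) n, (a' k ω - 1) * (-1 : ℝ) ^ k := by
      intro n hn
      rw [abs_le] at hn
      refine Finset.sum_congr rfl fun k hk => ?_
      rw [Finset.mem_Icc] at hk
      rw [hrw k (by rw [abs_le]; exact ⟨hk.1, by linarith [hk.2, hn.2]⟩)]
    constructor <;> rintro ⟨h1, h2⟩
    · exact ⟨fun n hn => by rw [← hrw n hn]; exact h1 n hn,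
        fun n hn => by rw [← hsums n hn]; exact h2 n hn⟩
    · exact ⟨fun n hn => by rw [hrw n hn]; exact h1 n hn,
        fun n hn => by rw [hsums n hn]; exact h2 n hn⟩
  rw [hEeq]
  have hsub : {ω : Ω | ∀ j ≤ 4*N,
        |∑ i ∈ Finset.range (j+1), (a' (-(2*(N:ℤ)) + (i:ℤ)) ω - 1) * (-1:ℝ)^i| ≤ ε/2}
      ⊆ {ω | (∀ n : ℤ, |n| ≤ 2 * N → |a' n ω - 1| ≤ ε) ∧
                   (∀ n : ℤ, |n| ≤ 2 * N →
                     |∑ k ∈ Finset.Icc (-(2 * N : ℤ)) n, (a' k ω - 1) * (-1 : ℝ) ^ k| ≤ ε)} := by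
    intro ω hω
    exact reduction hε0 N hω
  have hseq := seq_lb a' hmeas' hindep' hmap' ε hε0 hε1' (-(2*(N:ℤ))) (4*N)
  have hnum : Real.exp (-(5 * Real.log (1 / gp ε)) * N) ≤ gp ε ^ (4*N+1) := by
    have h1 : -(5 * Real.log (1 / gp ε)) * (N:ℝ) = ((5*N : ℕ) : ℝ) * Real.log (gp ε) := by
      rw [one_div, Real.log_inv]
      push_cast
      ring
    rw [h1, Real.exp_nat_mul, Real.exp_log hp0]
    exact pow_le_pow_of_le_one hp0.le hp1.le (by omega)
  calc ENNReal.ofReal (Real.exp (-(5 * Real.log (1 / gp ε)) * N))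
      ≤ ENNReal.ofReal (gp ε ^ (4*N+1)) := ENNReal.ofReal_le_ofReal hnum
    _ ≤ ℙ {ω : Ω | ∀ j ≤ 4*N,
        |∑ i ∈ Finset.range (j+1), (a' (-(2*(N:ℤ)) + (i:ℤ)) ω - 1) * (-1:ℝ)^i| ≤ ε/2} := hseq
    _ ≤ _ := measure_mono hsub
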